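/- Let Σ be the complex plane punctured at q−1 distinct points α₁,…,α_{q−1}, with holomorphic 1-form ω = dz/∏_{i=1}^{q−1}(z−α_i) and meromorphic function g(z) = z. If q ≤ m+2 (m a positive integer), then along every divergent curve Γ in Σ (a curve leaving every compact set, tending to one of the punctures or to ∞) the length integral ∫_Γ (1+|z|²)^{m/2} / ∏_{i=1}^{q−1}|z−α_i| |dz| is infinite; i.e., the conformal metric ds² = (1+|g|²)^m |ω|² is complete. -/

import Mathlib

open MeasureTheory Set Complex

lemma aux_dot_le (z w : ℂ) : |z.re * w.re + z.im * w.im| ≤ ‖z‖ * ‖w‖ := by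
  have h1 : ‖z‖ = Real.sqrt (z.re * z.re + z.im * z.im) := by
    rw [Complex.norm_def, Complex.normSq_apply]
  have h2 : ‖w‖ = Real.sqrt (w.re * w.re + w.im * w.im) := by
    rw [Complex.norm_def, Complex.normSq_apply]
  rw [h1, h2, ← Real.sqrt_mul (by nlinarith [sq_nonneg z.re, sq_nonneg z.im, sq_nonneg (z.re+z.im)] : (0:ℝ) ≤ z.re * z.re + z.im * z.im),
    show |z.re * w.re + z.im * w.im| = Real.sqrt ((z.re * w.re + z.im * w.im)^2) by
      rw [Real.sqrt_sq_eq_abs]]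
  apply Real.sqrt_le_sqrt
  nlinarith [sq_nonneg (z.re * w.im - z.im * w.re)]

lemma aux_normSq_deriv (φ : ℝ → ℂ) (d : ℂ) (s : ℝ) (h : HasDerivAt φ d s) :
    HasDerivAt (fun t => Complex.normSq (φ t))
      (2 * ((φ s).re * d.re + (φ s).im * d.im)) s := by
  have hre : HasDerivAt (fun t => (φ t).re) d.re s :=
    Complex.reCLM.hasFDerivAt.comp_hasDerivAt s h
  have him : HasDerivAt (fun t => (φ t).im) d.im s :=
    Complex.imCLM.hasFDerivAt.comp_hasDerivAt s h
  have H := (hre.mul hre).add (him.mul him)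
  simp only [Complex.normSq_apply]
  exact H.congr_deriv (by ring)

noncomputable def auxf (n : ℕ) (α : Fin n → ℂ) (z : ℂ) : ℝ :=
  (1/2) * Real.log (1 + Complex.normSq z)
    + ∑ i, (1/2) * (Real.log (1 + Complex.normSq (z - α i)) - Real.log (Complex.normSq (z - α i)))

lemma aux_hasDeriv (n : ℕ) (α : Fin n → ℂ) (γ : ℝ → ℂ) (s : ℝ)
    (hγ : DifferentiableAt ℝ γ s) (hs : ∀ i, γ s ≠ α i) :
    HasDerivAt (fun t => auxf n α (γ t))
      ((1/2) * ((2 * ((γ s).re * (deriv γ s).re + (γ s).im * (deriv γ s).im)) / (1 + Complex.normSq (γ s)))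
        + ∑ i, (1/2) * ((2 * ((γ s - α i).re * (deriv γ s).re + (γ s - α i).im * (deriv γ s).im)) / (1 + Complex.normSq (γ s - α i))
             - (2 * ((γ s - α i).re * (deriv γ s).re + (γ s - α i).im * (deriv γ s).im)) / (Complex.normSq (γ s - α i)))) s := by
  unfold auxf
  have hd : HasDerivAt γ (deriv γ s) s := hγ.hasDerivAt
  have h0 : HasDerivAt (fun t => Real.log (1 + Complex.normSq (γ t)))
      ((2 * ((γ s).re * (deriv γ s).re + (γ s).im * (deriv γ s).im)) / (1 + Complex.normSq (γ s))) s := by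
    have := ((aux_normSq_deriv γ (deriv γ s) s hd).const_add 1).log
      (by have := Complex.normSq_nonneg (γ s); positivity)
    exact this
  have hterm : ∀ i : Fin n, HasDerivAt
      (fun t => (1/2) * (Real.log (1 + Complex.normSq (γ t - α i)) - Real.log (Complex.normSq (γ t - α i))))
      ((1/2) * ((2 * ((γ s - α i).re * (deriv γ s).re + (γ s - α i).im * (deriv γ s).im)) / (1 + Complex.normSq (γ s - α i))
             - (2 * ((γ s - α i).re * (deriv γ s).re + (γ s - α i).im * (deriv γ s).im)) / (Complex.normSq (γ s - α i)))) s := by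
    intro i
    have hsub : HasDerivAt (fun t => γ t - α i) (deriv γ s) s := hd.sub_const _
    have hv := aux_normSq_deriv (fun t => γ t - α i) (deriv γ s) s hsub
    have hvne : Complex.normSq (γ s - α i) ≠ 0 := by
      simpa [Complex.normSq_eq_zero, sub_eq_zero] using hs i
    have h1 := (hv.const_add 1).log (by have := Complex.normSq_nonneg (γ s - α i); positivity)
    have h2 := hv.log hvne
    exact (h1.sub h2).const_mul (1/2)
  exact (h0.const_mul (1/2)).add (HasDerivAt.fun_sum (fun i _ => hterm i))

lemma aux_prod_bound (n : ℕ) (α : Fin n → ℂ) (M : ℝ) (hM : 1 ≤ M)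
    (hMα : ∀ i, ‖α i‖ ≤ M) (z : ℂ) (s : Finset (Fin n)) :
    ∏ i ∈ s, ‖z - α i‖ ≤ (Real.sqrt 2 * M) ^ s.card * (1 + ‖z‖^2) ^ ((s.card : ℝ)/2) := by
  have hA1 : (1:ℝ) ≤ 1 + ‖z‖^2 := by nlinarith [sq_nonneg ‖z‖]
  have hA0 : (0:ℝ) ≤ 1 + ‖z‖^2 := by positivity
  have hfac : ∀ i : Fin n, ‖z - α i‖ ≤ Real.sqrt 2 * M * Real.sqrt (1 + ‖z‖^2) := by
    intro i
    have h1 : ‖z - α i‖ ≤ ‖z‖ + M := (norm_sub_le _ _).trans (by linarith [hMα i])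
    have h2 : ‖z‖ + M ≤ M * (1 + ‖z‖) := by nlinarith [norm_nonneg z]
    have h3 : 1 + ‖z‖ ≤ Real.sqrt 2 * Real.sqrt (1 + ‖z‖^2) := by
      rw [← Real.sqrt_mul (by norm_num)]
      have : 1 + ‖z‖ = Real.sqrt ((1 + ‖z‖)^2) := (Real.sqrt_sq (by positivity)).symm
      rw [this]
      apply Real.sqrt_le_sqrt
      nlinarith [norm_nonneg z, sq_nonneg (1 - ‖z‖)]
    calc ‖z - α i‖ ≤ M * (1 + ‖z‖) := h1.trans h2
      _ ≤ M * (Real.sqrt 2 * Real.sqrt (1 + ‖z‖^2)) := by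
          apply mul_le_mul_of_nonneg_left h3 (by linarith)
      _ = Real.sqrt 2 * M * Real.sqrt (1 + ‖z‖^2) := by ring
  calc ∏ i ∈ s, ‖z - α i‖ ≤ ∏ _i ∈ s, (Real.sqrt 2 * M * Real.sqrt (1 + ‖z‖^2)) :=
        Finset.prod_le_prod (fun i _ => norm_nonneg _) (fun i _ => hfac i)
    _ = (Real.sqrt 2 * M) ^ s.card * (Real.sqrt (1 + ‖z‖^2)) ^ s.card := by
        rw [Finset.prod_const, mul_pow]
    _ = (Real.sqrt 2 * M) ^ s.card * (1 + ‖z‖^2) ^ ((s.card : ℝ)/2) := by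
        congr 1
        rw [Real.sqrt_eq_rpow, ← Real.rpow_natCast ((1 + ‖z‖^2) ^ ((1:ℝ)/2)) s.card,
          ← Real.rpow_mul hA0]
        ring_nf

lemma aux_key (m n : ℕ) (hn : n ≤ m + 1) (α : Fin n → ℂ) (M : ℝ) (hM : 1 ≤ M)
    (hMα : ∀ i, ‖α i‖ ≤ M) (z : ℂ) (hz : ∀ i, z ≠ α i) :
    ‖z‖ / (1 + ‖z‖^2) + ∑ i, 1 / (‖z - α i‖ * (1 + ‖z - α i‖^2))
      ≤ ((n : ℝ) + 1) * (Real.sqrt 2 * M) ^ (m+2)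
          * ((1 + ‖z‖^2) ^ ((m:ℝ)/2) / ∏ i, ‖z - α i‖) := by
  set c : ℝ := Real.sqrt 2 * M with hc
  have hc1 : (1:ℝ) ≤ c := by
    have h2 : (1:ℝ) ≤ Real.sqrt 2 := by
      rw [show (1:ℝ) = Real.sqrt 1 by simp]
      exact Real.sqrt_le_sqrt (by norm_num)
    nlinarith
  set K : ℝ := c ^ (m+2) with hK
  have hK1 : (1:ℝ) ≤ K := by calc (1:ℝ) = 1^(m+2) := by norm_num
    _ ≤ c^(m+2) := pow_le_pow_left₀ (by norm_num) hc1 _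
  set A : ℝ := 1 + ‖z‖^2 with hA
  have hA1 : (1:ℝ) ≤ A := by rw [hA]; nlinarith [sq_nonneg ‖z‖]
  have hA0 : (0:ℝ) < A := by positivity
  set P : ℝ := ∏ i, ‖z - α i‖ with hP
  have hwpos : ∀ i : Fin n, 0 < ‖z - α i‖ := fun i => by
    rw [norm_pos_iff, sub_ne_zero]; exact hz i
  have hP0 : 0 < P := Finset.prod_pos (fun i _ => hwpos i)
  set ρ : ℝ := A ^ ((m:ℝ)/2) / P with hρ
  have hρ0 : 0 ≤ ρ := by positivity
  -- L1
  have L1 : ‖z‖ / A ≤ K * ρ := by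
    rw [hρ, ← mul_div_assoc, div_le_div_iff₀ hA0 hP0]
    have h1 : ‖z‖ ≤ Real.sqrt A := by
      rw [show ‖z‖ = Real.sqrt (‖z‖^2) from (Real.sqrt_sq (norm_nonneg z)).symm]
      exact Real.sqrt_le_sqrt (by linarith)
    have h2 : P ≤ c ^ n * A ^ ((n : ℝ)/2) := by
      have := aux_prod_bound n α M hM hMα z Finset.univ
      simpa using this
    calc ‖z‖ * P ≤ Real.sqrt A * (c ^ n * A ^ ((n : ℝ)/2)) := by
          apply mul_le_mul h1 h2 (le_of_lt hP0) (Real.sqrt_nonneg A)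
      _ = c ^ n * A ^ (((n : ℝ) + 1)/2) := by
          rw [Real.sqrt_eq_rpow, show ((n:ℝ)+1)/2 = (n:ℝ)/2 + 1/2 by ring,
            Real.rpow_add hA0]
          ring
      _ ≤ c ^ (m+2) * A ^ (((m : ℝ) + 2)/2) := by
          apply mul_le_mul (pow_le_pow_right₀ (by linarith) (by omega))
            (Real.rpow_le_rpow_of_exponent_le hA1 (by
              push_cast
              have : (n : ℝ) ≤ (m : ℝ) + 1 := by exact_mod_cast hn
              linarith)) (by positivity) (by positivity)
      _ = K * A ^ ((m:ℝ)/2) * A := by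
          rw [hK, show ((m : ℝ) + 2)/2 = (m:ℝ)/2 + 1 by ring, Real.rpow_add hA0,
            Real.rpow_one]
          ring
  -- L2
  have L2 : ∀ i : Fin n, 1 / (‖z - α i‖ * (1 + ‖z - α i‖^2)) ≤ K * ρ := by
    intro i
    have hvi : (0:ℝ) < 1 + ‖z - α i‖^2 := by positivity
    have hden : (0:ℝ) < ‖z - α i‖ * (1 + ‖z - α i‖^2) := mul_pos (hwpos i) hvi
    rw [hρ, ← mul_div_assoc, div_le_div_iff₀ hden hP0]
    have hPsplit : P = ‖z - α i‖ * ∏ j ∈ Finset.univ.erase i, ‖z - α j‖ :=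
      (Finset.mul_prod_erase Finset.univ _ (Finset.mem_univ i)).symm
    have hcard : (Finset.univ.erase i).card = n - 1 := by
      rw [Finset.card_erase_of_mem (Finset.mem_univ i), Finset.card_univ, Fintype.card_fin]
    have herase : ∏ j ∈ Finset.univ.erase i, ‖z - α j‖ ≤ K * A ^ ((m:ℝ)/2) := by
      have h := aux_prod_bound n α M hM hMα z (Finset.univ.erase i)
      rw [hcard] at h
      refine h.trans ?_
      apply mul_le_mul (pow_le_pow_right₀ (by linarith) (by omega))
        (Real.rpow_le_rpow_of_exponent_le hA1 (by
          have : ((n - 1 : ℕ) : ℝ) ≤ (m : ℝ) := by exact_mod_cast (by omega : n - 1 ≤ m)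
          linarith)) (by positivity) (by positivity)
    calc 1 * P = ‖z - α i‖ * ∏ j ∈ Finset.univ.erase i, ‖z - α j‖ := by
          rw [one_mul, hPsplit]
      _ ≤ ‖z - α i‖ * (K * A ^ ((m:ℝ)/2)) := by
          apply mul_le_mul_of_nonneg_left herase (le_of_lt (hwpos i))
      _ ≤ K * A ^ ((m:ℝ)/2) * (‖z - α i‖ * (1 + ‖z - α i‖^2)) := by
          have h1 : ‖z - α i‖ * (K * A ^ ((m:ℝ)/2)) * 1
              ≤ ‖z - α i‖ * (K * A ^ ((m:ℝ)/2)) * (1 + ‖z - α i‖^2) := by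
            apply mul_le_mul_of_nonneg_left (by nlinarith [sq_nonneg ‖z - α i‖]) (by positivity)
          calc ‖z - α i‖ * (K * A ^ ((m:ℝ)/2))
              = ‖z - α i‖ * (K * A ^ ((m:ℝ)/2)) * 1 := by ring
            _ ≤ ‖z - α i‖ * (K * A ^ ((m:ℝ)/2)) * (1 + ‖z - α i‖^2) := h1
            _ = K * A ^ ((m:ℝ)/2) * (‖z - α i‖ * (1 + ‖z - α i‖^2)) := by ring
  calc ‖z‖ / A + ∑ i, 1 / (‖z - α i‖ * (1 + ‖z - α i‖^2))
      ≤ K * ρ + ∑ _i : Fin n, K * ρ :=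
        add_le_add L1 (Finset.sum_le_sum (fun i _ => L2 i))
    _ = ((n : ℝ) + 1) * K * ρ := by
        rw [Finset.sum_const, Finset.card_univ, Fintype.card_fin, nsmul_eq_mul]
        ring
    _ = ((n : ℝ) + 1) * K * ρ := rfl
lemma aux_log_mono (v : ℝ) (hv : 0 ≤ v) : Real.log v ≤ Real.log (1 + v) := by
  rcases le_total v 1 with h | h
  · exact (Real.log_nonpos hv h).trans (Real.log_nonneg (by linarith))
  · exact Real.log_le_log (by linarith) (by linarith)

lemma aux_term_nonneg (n : ℕ) (α : Fin n → ℂ) (z : ℂ) (i : Fin n) :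
    0 ≤ (1/2) * (Real.log (1 + Complex.normSq (z - α i)) - Real.log (Complex.normSq (z - α i))) := by
  have := aux_log_mono (Complex.normSq (z - α i)) (Complex.normSq_nonneg _)
  linarith

lemma aux_lb1 (n : ℕ) (α : Fin n → ℂ) (z : ℂ) :
    (1/2) * Real.log (1 + Complex.normSq z) ≤ auxf n α z := by
  unfold auxf
  have := Finset.sum_nonneg (fun i (_ : i ∈ Finset.univ) => aux_term_nonneg n α z i)
  linarith

lemma aux_lb2 (n : ℕ) (α : Fin n → ℂ) (z : ℂ) (i : Fin n) :
    - Real.log ‖z - α i‖ ≤ auxf n α z := by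
  unfold auxf
  have h0 : 0 ≤ (1/2) * Real.log (1 + Complex.normSq z) := by
    have : (0:ℝ) ≤ Real.log (1 + Complex.normSq z) :=
      Real.log_nonneg (by linarith [Complex.normSq_nonneg z])
    linarith
  have hsingle : (1/2) * (Real.log (1 + Complex.normSq (z - α i)) - Real.log (Complex.normSq (z - α i)))
      ≤ ∑ j, (1/2) * (Real.log (1 + Complex.normSq (z - α j)) - Real.log (Complex.normSq (z - α j))) :=
    Finset.single_le_sum (fun j _ => aux_term_nonneg n α z j) (Finset.mem_univ i)
  have hlogv : Real.log (Complex.normSq (z - α i)) = 2 * Real.log ‖z - α i‖ := by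
    rw [show Complex.normSq (z - α i) = ‖z - α i‖^2 by
      rw [Complex.normSq_eq_norm_sq], Real.log_pow]
    norm_num
  have hlog1 : 0 ≤ Real.log (1 + Complex.normSq (z - α i)) :=
    Real.log_nonneg (by linarith [Complex.normSq_nonneg (z - α i)])
  rw [hlogv] at hsingle
  linarith

lemma aux_alg1 (D v : ℝ) (hv : v ≠ 0) (h1v : 1 + v ≠ 0) :
    (1/2) * (2 * D / (1 + v) - 2 * D / v) = -(D / (v * (1 + v))) := by
  field_simp
  ring

lemma aux_alg2 (a b : ℝ) (ha : a ≠ 0) (h1 : 1 + a^2 ≠ 0) :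
    (a * b) / (a^2 * (1 + a^2)) = (1 / (a * (1 + a^2))) * b := by
  field_simp

theorem complete_model_metric
    (m q : ℕ) (hm : 1 ≤ m) (hq : q ≤ m + 2)
    (α : Fin (q - 1) → ℂ) (hα : Function.Injective α)
    (γ : ℝ → ℂ)
    (hγ : ∀ t ∈ Set.Ico (0 : ℝ) 1, DifferentiableAt ℝ γ t)
    (hmaps : ∀ t ∈ Set.Ico (0 : ℝ) 1, γ t ∉ Set.range α)
    (hdiv : ∀ K : Set ℂ, IsCompact K → K ⊆ {z : ℂ | z ∉ Set.range α} →
      ∃ t₀ ∈ Set.Ico (0 : ℝ) 1, ∀ t ∈ Set.Ico t₀ 1, γ t ∉ K) :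
    ∫⁻ t in Set.Ico (0 : ℝ) 1,
      ENNReal.ofReal
        ((1 + ‖γ t‖ ^ 2) ^ ((m : ℝ) / 2) / (∏ i, ‖γ t - α i‖) * ‖deriv γ t‖) = ⊤ := by
  by_contra hI
  have hn : q - 1 ≤ m + 1 := by omega
  set M : ℝ := 1 + ∑ i, ‖α i‖ with hM_def
  have hsum0 : 0 ≤ ∑ i, ‖α i‖ := Finset.sum_nonneg fun i _ => norm_nonneg _
  have hM1 : 1 ≤ M := by rw [hM_def]; linarith
  have hMα : ∀ i, ‖α i‖ ≤ M := by
    intro i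
    have h1 : ‖α i‖ ≤ ∑ j, ‖α j‖ :=
      Finset.single_le_sum (fun j _ => norm_nonneg (α j)) (Finset.mem_univ i)
    rw [hM_def]; linarith
  set C : ℝ := (((q-1 : ℕ) : ℝ) + 1) * (Real.sqrt 2 * M) ^ (m + 2) with hC_def
  have hC0 : 0 ≤ C := by positivity
  set g : ℝ → ℝ :=
    fun t => (1 + ‖γ t‖ ^ 2) ^ ((m : ℝ) / 2) / (∏ i, ‖γ t - α i‖) * ‖deriv γ t‖ with hg_def
  have hg0 : ∀ t, 0 ≤ g t := fun t => by rw [hg_def]; positivity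
  have hγc : ContinuousOn γ (Ico 0 1) := fun t ht => ((hγ t ht).continuousAt).continuousWithinAt
  -- integrability of g on Ico 0 1
  have hgm : AEStronglyMeasurable g (volume.restrict (Ico (0:ℝ) 1)) := by
    have h1 : ContinuousOn
        (fun t => (1 + ‖γ t‖ ^ 2) ^ ((m : ℝ) / 2) / ∏ i, ‖γ t - α i‖) (Ico (0:ℝ) 1) := by
      apply ContinuousOn.div
      · exact (continuousOn_const.add ((hγc.norm).pow 2)).rpow_const
          (fun t ht => Or.inr (by positivity))
      · exact continuousOn_finset_prod _ (fun i _ => (hγc.sub continuousOn_const).norm)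
      · intro t ht
        apply Finset.prod_ne_zero_iff.mpr
        intro i _
        have h2 : γ t ≠ α i := fun h => hmaps t ht ⟨i, h.symm⟩
        simpa [sub_eq_zero] using h2
    exact (h1.aestronglyMeasurable measurableSet_Ico).mul
      ((measurable_deriv γ).norm.aestronglyMeasurable.restrict)
  have hgint : IntegrableOn g (Ico (0:ℝ) 1) volume := by
    refine ⟨hgm, ?_⟩
    rw [hasFiniteIntegral_iff_ofReal (Filter.Eventually.of_forall hg0)]
    exact Ne.lt_top hI
  set B : ℝ := ∫ t in Ico (0:ℝ) 1, g t with hB_def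
  set F : ℝ → ℝ := fun t => auxf (q-1) α (γ t) with hF_def
  -- the length bound
  have hFbound : ∀ t ∈ Ico (0:ℝ) 1, F t ≤ F 0 + C * B := by
    intro t ht
    have hsub : Icc (0:ℝ) t ⊆ Ico (0:ℝ) 1 := fun s hs => ⟨hs.1, lt_of_le_of_lt hs.2 ht.2⟩
    set E : ℝ → ℝ := fun s =>
      (1/2) * ((2 * ((γ s).re * (deriv γ s).re + (γ s).im * (deriv γ s).im)) / (1 + Complex.normSq (γ s)))
        + ∑ i, (1/2) * ((2 * ((γ s - α i).re * (deriv γ s).re + (γ s - α i).im * (deriv γ s).im)) / (1 + Complex.normSq (γ s - α i))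
             - (2 * ((γ s - α i).re * (deriv γ s).re + (γ s - α i).im * (deriv γ s).im)) / (Complex.normSq (γ s - α i))) with hE_def
    have hne : ∀ s ∈ Icc (0:ℝ) t, ∀ i, γ s ≠ α i :=
      fun s hs i h => hmaps s (hsub hs) ⟨i, h.symm⟩
    have hE : ∀ s ∈ Set.uIcc (0:ℝ) t, HasDerivAt F (E s) s := by
      rw [Set.uIcc_of_le ht.1]
      intro s hs
      exact aux_hasDeriv (q-1) α γ s (hγ s (hsub hs)) (hne s hs)
    -- pointwise bound
    have hEb : ∀ s ∈ Icc (0:ℝ) t, |E s| ≤ C * g s := by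
      intro s hs
      simp only [hE_def, hg_def]
      set z := γ s with hz_def
      set d := deriv γ s with hd_def
      have hzα : ∀ i, z ≠ α i := hne s hs
      have hw : ∀ i : Fin (q-1), (0:ℝ) < ‖z - α i‖ := fun i => by
        rw [norm_pos_iff, sub_ne_zero]; exact hzα i
      have hnsz : Complex.normSq z = ‖z‖^2 := by
        rw [Complex.normSq_eq_norm_sq]
      have hnsw : ∀ i : Fin (q-1), Complex.normSq (z - α i) = ‖z - α i‖^2 := fun i => by
        rw [Complex.normSq_eq_norm_sq]
      have hA0 : (0:ℝ) < 1 + ‖z‖^2 := by positivity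
      have hT0 : |(1/2) * ((2 * (z.re * d.re + z.im * d.im)) / (1 + Complex.normSq z))|
          ≤ (‖z‖ / (1 + ‖z‖^2)) * ‖d‖ := by
        have he : (1/2) * ((2 * (z.re * d.re + z.im * d.im)) / (1 + Complex.normSq z))
            = (z.re * d.re + z.im * d.im) / (1 + ‖z‖^2) := by
          rw [hnsz]; ring
        rw [he, abs_div, abs_of_pos hA0]
        calc |z.re * d.re + z.im * d.im| / (1 + ‖z‖^2) ≤ (‖z‖ * ‖d‖) / (1 + ‖z‖^2) := by
              gcongr
              exact aux_dot_le z d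
          _ = (‖z‖ / (1 + ‖z‖^2)) * ‖d‖ := by ring
      have hTi : ∀ i : Fin (q-1),
          |(1/2) * ((2 * ((z - α i).re * d.re + (z - α i).im * d.im)) / (1 + Complex.normSq (z - α i))
             - (2 * ((z - α i).re * d.re + (z - α i).im * d.im)) / (Complex.normSq (z - α i)))|
          ≤ (1 / (‖z - α i‖ * (1 + ‖z - α i‖^2))) * ‖d‖ := by
        intro i
        have hwi := hw i
        have hvi : (0:ℝ) < ‖z - α i‖^2 * (1 + ‖z - α i‖^2) := by positivity
        have he : (1/2) * ((2 * ((z - α i).re * d.re + (z - α i).im * d.im)) / (1 + Complex.normSq (z - α i))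
             - (2 * ((z - α i).re * d.re + (z - α i).im * d.im)) / (Complex.normSq (z - α i)))
            = -(((z - α i).re * d.re + (z - α i).im * d.im) / (‖z - α i‖^2 * (1 + ‖z - α i‖^2))) := by
          have hne1 : ‖z - α i‖ ≠ 0 := ne_of_gt hwi
          have hne2 : (1:ℝ) + ‖z - α i‖^2 ≠ 0 := by positivity
          rw [hnsw i]
          exact aux_alg1 _ _ (pow_ne_zero 2 hne1) hne2
        rw [he, abs_neg, abs_div, abs_of_pos hvi]
        calc |(z - α i).re * d.re + (z - α i).im * d.im| / (‖z - α i‖^2 * (1 + ‖z - α i‖^2))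
            ≤ (‖z - α i‖ * ‖d‖) / (‖z - α i‖^2 * (1 + ‖z - α i‖^2)) := by
              gcongr
              exact aux_dot_le (z - α i) d
          _ = (1 / (‖z - α i‖ * (1 + ‖z - α i‖^2))) * ‖d‖ := by
              have hne1 : ‖z - α i‖ ≠ 0 := ne_of_gt hwi
              have hne2 : (1:ℝ) + ‖z - α i‖^2 ≠ 0 := by positivity
              exact aux_alg2 _ _ hne1 hne2
      have hsum : |(1/2) * ((2 * (z.re * d.re + z.im * d.im)) / (1 + Complex.normSq z))
          + ∑ i, (1/2) * ((2 * ((z - α i).re * d.re + (z - α i).im * d.im)) / (1 + Complex.normSq (z - α i))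
             - (2 * ((z - α i).re * d.re + (z - α i).im * d.im)) / (Complex.normSq (z - α i)))|
          ≤ (‖z‖ / (1 + ‖z‖^2) + ∑ i, 1 / (‖z - α i‖ * (1 + ‖z - α i‖^2))) * ‖d‖ := by
        calc _ ≤ |(1/2) * ((2 * (z.re * d.re + z.im * d.im)) / (1 + Complex.normSq z))|
              + |∑ i, (1/2) * ((2 * ((z - α i).re * d.re + (z - α i).im * d.im)) / (1 + Complex.normSq (z - α i))
                 - (2 * ((z - α i).re * d.re + (z - α i).im * d.im)) / (Complex.normSq (z - α i)))| := abs_add_le _ _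
          _ ≤ (‖z‖ / (1 + ‖z‖^2)) * ‖d‖
              + ∑ i, (1 / (‖z - α i‖ * (1 + ‖z - α i‖^2))) * ‖d‖ := by
              apply add_le_add hT0
              exact (Finset.abs_sum_le_sum_abs _ _).trans
                (Finset.sum_le_sum (fun i _ => hTi i))
          _ = (‖z‖ / (1 + ‖z‖^2) + ∑ i, 1 / (‖z - α i‖ * (1 + ‖z - α i‖^2))) * ‖d‖ := by
              rw [add_mul, Finset.sum_mul]
      refine hsum.trans ?_
      have hkey := aux_key m (q-1) hn α M hM1 hMα z hzα
      calc (‖z‖ / (1 + ‖z‖^2) + ∑ i, 1 / (‖z - α i‖ * (1 + ‖z - α i‖^2))) * ‖d‖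
          ≤ (C * ((1 + ‖z‖^2) ^ ((m:ℝ)/2) / ∏ i, ‖z - α i‖)) * ‖d‖ := by
            apply mul_le_mul_of_nonneg_right _ (norm_nonneg d)
            exact hkey
        _ = C * ((1 + ‖z‖ ^ 2) ^ ((m : ℝ) / 2) / (∏ i, ‖z - α i‖) * ‖d‖) := by ring
    -- measurability of E
    have hEm : AEStronglyMeasurable E (volume.restrict (Icc (0:ℝ) t)) := by
      have aγ : AEMeasurable γ (volume.restrict (Icc (0:ℝ) t)) :=
        ((hγc.mono hsub).aemeasurable measurableSet_Icc)
      have had : AEMeasurable (deriv γ) (volume.restrict (Icc (0:ℝ) t)) :=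
        (measurable_deriv γ).aemeasurable
      apply AEMeasurable.aestronglyMeasurable
      rw [hE_def]
      apply AEMeasurable.add
      · exact ((((Complex.measurable_re.comp_aemeasurable aγ).mul
          (Complex.measurable_re.comp_aemeasurable had)).add
          ((Complex.measurable_im.comp_aemeasurable aγ).mul
          (Complex.measurable_im.comp_aemeasurable had))).const_mul 2).div
          (aemeasurable_const.add
            (Complex.continuous_normSq.measurable.comp_aemeasurable aγ)) |>.const_mul (1/2)
      · apply Finset.aemeasurable_fun_sum
        intro i _
        have aw : AEMeasurable (fun s => γ s - α i) (volume.restrict (Icc (0:ℝ) t)) :=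
          aγ.sub aemeasurable_const
        have anum : AEMeasurable
            (fun s => 2 * ((γ s - α i).re * (deriv γ s).re + (γ s - α i).im * (deriv γ s).im))
            (volume.restrict (Icc (0:ℝ) t)) :=
          (((Complex.measurable_re.comp_aemeasurable aw).mul
            (Complex.measurable_re.comp_aemeasurable had)).add
            ((Complex.measurable_im.comp_aemeasurable aw).mul
            (Complex.measurable_im.comp_aemeasurable had))).const_mul 2
        have av : AEMeasurable (fun s => Complex.normSq (γ s - α i))
            (volume.restrict (Icc (0:ℝ) t)) :=
          Complex.continuous_normSq.measurable.comp_aemeasurable aw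
        exact ((anum.div (aemeasurable_const.add av)).sub (anum.div av)).const_mul (1/2)
    have hgIcc : IntegrableOn g (Icc (0:ℝ) t) volume := hgint.mono_set hsub
    have hEint : IntegrableOn E (Icc (0:ℝ) t) volume := by
      apply Integrable.mono' (hgIcc.const_mul C) hEm
      filter_upwards [ae_restrict_mem measurableSet_Icc] with s hs
      rw [Real.norm_eq_abs]
      exact hEb s hs
    have hEii : IntervalIntegrable E volume 0 t := by
      apply IntegrableOn.intervalIntegrable
      rwa [Set.uIcc_of_le ht.1]
    have hftc : ∫ s in (0:ℝ)..t, E s = F t - F 0 :=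
      intervalIntegral.integral_eq_sub_of_hasDerivAt hE hEii
    have hCgii : IntervalIntegrable (fun s => C * g s) volume 0 t := by
      apply IntegrableOn.intervalIntegrable
      rw [Set.uIcc_of_le ht.1]
      exact hgIcc.const_mul C
    have hle1 : ∫ s in (0:ℝ)..t, E s ≤ ∫ s in (0:ℝ)..t, C * g s := by
      apply intervalIntegral.integral_mono_on ht.1 hEii hCgii
      intro s hs
      exact (le_abs_self _).trans (hEb s hs)
    have hle2 : ∫ s in (0:ℝ)..t, C * g s ≤ C * B := by
      rw [intervalIntegral.integral_const_mul]
      apply mul_le_mul_of_nonneg_left _ hC0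
      rw [intervalIntegral.integral_of_le ht.1, hB_def]
      apply setIntegral_mono_set hgint (Filter.Eventually.of_forall (fun s => hg0 s))
      exact HasSubset.Subset.eventuallyLE
        (fun s hs => ⟨le_of_lt hs.1, lt_of_le_of_lt hs.2 ht.2⟩)
    linarith [hftc ▸ hle1.trans hle2]
  -- the divergence part
  set R : ℝ := F 0 + C * B with hR_def
  set Kset : Set ℂ := {z : ℂ | ‖z‖ ≤ Real.exp R ∧ ∀ i, Real.exp (-R) ≤ ‖z - α i‖} with hK_def
  have hKcl : IsClosed Kset := by
    have heq : Kset = (fun z : ℂ => ‖z‖) ⁻¹' Iic (Real.exp R)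
        ∩ ⋂ i, (fun z : ℂ => ‖z - α i‖) ⁻¹' Ici (Real.exp (-R)) := by
      ext w
      simp [hK_def, Set.mem_iInter]
    rw [heq]
    exact IsClosed.inter (isClosed_Iic.preimage continuous_norm)
      (isClosed_iInter fun i => isClosed_Ici.preimage ((continuous_id.sub continuous_const).norm))
  have hKb : Bornology.IsBounded Kset := by
    apply Bornology.IsBounded.subset (Metric.isBounded_closedBall (x := (0:ℂ)) (r := Real.exp R))
    intro w hw
    rw [Metric.mem_closedBall, dist_zero_right]
    exact hw.1
  have hKcpt : IsCompact Kset := Metric.isCompact_of_isClosed_isBounded hKcl hKb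
  have hKsub : Kset ⊆ {z : ℂ | z ∉ Set.range α} := by
    rintro w hw ⟨i, hi⟩
    have h1 := hw.2 i
    rw [hi, sub_self, norm_zero] at h1
    linarith [Real.exp_pos (-R)]
  obtain ⟨t₀, ht₀, hout⟩ := hdiv Kset hKcpt hKsub
  apply hout t₀ ⟨le_refl _, ht₀.2⟩
  -- show γ t₀ ∈ Kset
  have hFt : F t₀ ≤ R := hFbound t₀ ht₀
  have hzα : ∀ i, γ t₀ ≠ α i := fun i h => hmaps t₀ ht₀ ⟨i, h.symm⟩
  rw [hK_def]
  constructor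
  · have h1 := (aux_lb1 (q-1) α (γ t₀)).trans hFt
    have h2 : Real.log (1 + Complex.normSq (γ t₀)) ≤ 2 * R := by linarith
    have h3 : 1 + Complex.normSq (γ t₀) ≤ Real.exp (2 * R) :=
      (Real.log_le_iff_le_exp (by linarith [Complex.normSq_nonneg (γ t₀)])).mp h2
    have h4 : ‖γ t₀‖^2 ≤ (Real.exp R)^2 := by
      have hns : Complex.normSq (γ t₀) = ‖γ t₀‖^2 := by
        rw [Complex.normSq_eq_norm_sq]
      have he : Real.exp (2 * R) = (Real.exp R)^2 := by
        rw [two_mul, Real.exp_add, sq]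
      rw [hns] at h3
      rw [he] at h3
      linarith
    calc ‖γ t₀‖ = Real.sqrt (‖γ t₀‖^2) := (Real.sqrt_sq (norm_nonneg _)).symm
      _ ≤ Real.sqrt ((Real.exp R)^2) := Real.sqrt_le_sqrt h4
      _ = Real.exp R := Real.sqrt_sq (Real.exp_pos R).le
  · intro i
    have h1 := (aux_lb2 (q-1) α (γ t₀) i).trans hFt
    have h2 : -R ≤ Real.log ‖γ t₀ - α i‖ := by linarith
    have hwi : (0:ℝ) < ‖γ t₀ - α i‖ := by
      rw [norm_pos_iff, sub_ne_zero]; exact hzα i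
    calc Real.exp (-R) ≤ Real.exp (Real.log ‖γ t₀ - α i‖) := Real.exp_le_exp.mpr h2
      _ = ‖γ t₀ - α i‖ := Real.exp_log hwi
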